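/- With the CP-Azure construction (k = pg, L_m = Σ_{i∈group m} β_i D_i, G_r = Σ_m L_m), the extended code does not tolerate all sets of r + 1 erasures: specifically, there exists a codeword supported on r + 1 data coordinates within a single local group together with the dependent parity relations, exhibiting distance exactly r + 1 when g ≥ r + 1. -/

import Mathlib

open Polynomial Finset

lemma cauchy_zero {F : Type*} [Field F] {ι κ : Type*} [DecidableEq ι] [DecidableEq κ]
    (a : ι → F) (b : κ → F) (S : Finset ι) (T : Finset κ)
    (ha : Set.InjOn a S) (hb : Set.InjOn b T) (hSne : S.Nonempty)
    (hab : ∀ i ∈ S, ∀ j ∈ T, b j - a i ≠ 0)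
    (hcard : S.card ≤ T.card) (D : ι → F)
    (hsum : ∀ j ∈ T, ∑ i ∈ S, (b j - a i)⁻¹ * D i = 0) :
    ∀ i ∈ S, D i = 0 := by
  set P : F[X] := ∑ i ∈ S, C (D i) * Lagrange.nodal (S.erase i) a with hP
  have hne : (0 : ℕ) < T.card := lt_of_lt_of_le (Finset.card_pos.mpr hSne) hcard
  have hdeg : P.degree < (T.card : ℕ) := by
    refine lt_of_le_of_lt (Polynomial.degree_sum_le _ _) ?_
    rw [Finset.sup_lt_iff (by exact_mod_cast WithBot.bot_lt_coe _)]
    intro i hi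
    refine lt_of_le_of_lt (Polynomial.degree_mul_le _ _) ?_
    have h1 : (C (D i)).degree ≤ 0 := Polynomial.degree_C_le
    have h2 : (Lagrange.nodal (S.erase i) a).degree = ((S.erase i).card : ℕ) :=
      Lagrange.degree_nodal
    have h3 : (S.erase i).card = S.card - 1 := Finset.card_erase_of_mem hi
    calc (C (D i)).degree + (Lagrange.nodal (S.erase i) a).degree
        ≤ 0 + ((S.erase i).card : ℕ) := add_le_add h1 (le_of_eq h2)
      _ = ((S.erase i).card : ℕ) := zero_add _
      _ < (T.card : ℕ) := by
          rw [h3]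
          exact_mod_cast (by omega : S.card - 1 < T.card)
  have hPz : P = 0 := by
    refine Polynomial.eq_zero_of_degree_lt_of_eval_index_eq_zero T hb hdeg ?_
    intro j hj
    have hev : P.eval (b j) =
        (∏ i ∈ S, (b j - a i)) * ∑ i ∈ S, (b j - a i)⁻¹ * D i := by
      rw [hP, Polynomial.eval_finset_sum, Finset.mul_sum]
      refine Finset.sum_congr rfl fun i hi => ?_
      rw [Polynomial.eval_mul, Polynomial.eval_C, Lagrange.eval_nodal,
        ← Finset.mul_prod_erase S (fun i' => b j - a i') hi]
      have hne := hab i hi j hj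
      field_simp
    rw [hev, hsum j hj, mul_zero]
  intro i hi
  have hev : P.eval (a i) = D i * ∏ i'' ∈ S.erase i, (a i - a i'') := by
    rw [hP, Polynomial.eval_finset_sum]
    rw [Finset.sum_eq_single i]
    · rw [Polynomial.eval_mul, Polynomial.eval_C, Lagrange.eval_nodal]
    · intro i' hi' hne
      rw [Polynomial.eval_mul, Lagrange.eval_nodal,
        Finset.prod_eq_zero (Finset.mem_erase.mpr ⟨fun h => hne h.symm, hi⟩) (sub_self (a i)),
        mul_zero]
    · intro h; exact absurd hi h
  have hprod : (∏ i'' ∈ S.erase i, (a i - a i'')) ≠ 0 := by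
    rw [Finset.prod_ne_zero_iff]
    intro i'' hi''
    obtain ⟨hne, hmem⟩ := Finset.mem_erase.mp hi''
    exact sub_ne_zero_of_ne fun h => hne (ha hmem hi (h.symm))
  have := hev.symm.trans (by rw [hPz, Polynomial.eval_zero])
  exact (mul_eq_zero.mp this).resolve_right hprod

lemma hammingNorm_sumElim {α β γ : Type*} [Fintype α] [Fintype β] [Zero γ] [DecidableEq γ]
    (f : α → γ) (g : β → γ) :
    hammingNorm (Sum.elim f g) = hammingNorm f + hammingNorm g := by
  classical
  simp only [hammingNorm, Finset.card_filter]
  rw [Fintype.sum_sum_type]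
  simp
  congr 1 <;> apply Finset.sum_congr rfl <;> intro x _ <;> split_ifs <;> simp_all

/-- The (k, r, p) CP-Azure code has minimum distance exactly r+1 when g ≥ r+1.
    (Here the number of global parities is `r + 1`, so the distance is `r + 2`.) -/
theorem stmt12 {F : Type*} [Field F] [CharP F 2] [DecidableEq F] {p g r : ℕ}
    (hp : 0 < p)
    (a : Fin p × Fin g → F) (b : Fin (r + 1) → F)
    (hab : Function.Injective (Sum.elim a b))
    (hg : r + 2 ≤ g)
    (ext : (Fin p × Fin g → F) → ((Fin p × Fin g) ⊕ (Fin (r + 1) ⊕ Fin p) → F))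
    (hext : ∀ D, ext D = Sum.elim D (Sum.elim
        (fun j => ∑ i, (b j - a i)⁻¹ * D i)
        (fun m => ∑ t : Fin g, (b (Fin.last r) - a (m, t))⁻¹ * D (m, t)))) :
    (∃ D : Fin p × Fin g → F, D ≠ 0 ∧ (∃ m, ∀ i, D i ≠ 0 → i.1 = m) ∧
        hammingNorm (ext D) = r + 2) ∧
    (∀ D : Fin p × Fin g → F, D ≠ 0 → r + 2 ≤ hammingNorm (ext D)) := by
  classical
  have ha : Function.Injective a := fun x y h => by
    have := @hab (Sum.inl x) (Sum.inl y) (by simpa using h)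
    simpa using this
  have hbinj : Function.Injective b := fun x y h => by
    have := @hab (Sum.inr x) (Sum.inr y) (by simpa using h)
    simpa using this
  have hba : ∀ (i : Fin p × Fin g) (j : Fin (r + 1)), b j - a i ≠ 0 := by
    intro i j h
    have h2 : Sum.elim a b (Sum.inr j) = Sum.elim a b (Sum.inl i) := by
      simpa using sub_eq_zero.mp h
    simpa using hab h2
  have hn : ∀ D : Fin p × Fin g → F, hammingNorm (ext D) = hammingNorm D
      + (hammingNorm (fun j : Fin (r + 1) => ∑ i, (b j - a i)⁻¹ * D i)
        + hammingNorm (fun m : Fin p => ∑ t : Fin g, (b (Fin.last r) - a (m, t))⁻¹ * D (m, t))) := by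
    intro D
    rw [hext, hammingNorm_sumElim, hammingNorm_sumElim]
  constructor
  · -- upper bound: codeword of weight r+2
    set m0 : Fin p := ⟨0, hp⟩ with hm0
    set M : Matrix (Fin (r + 1)) (Fin (r + 2)) F :=
      Matrix.of fun j t => (b j - a (m0, Fin.castLE hg t))⁻¹ with hM
    have hrank : Module.finrank F (Fin (r + 1) → F) < Module.finrank F (Fin (r + 2) → F) := by
      simp [Module.finrank_pi]
    obtain ⟨v, hv_mem, hv0⟩ :=
      (Submodule.ne_bot_iff _).mp (LinearMap.ker_ne_bot_of_finrank_lt (f := M.mulVecLin) hrank)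
    have hMv : M.mulVec v = 0 := hv_mem
    have hMvj : ∀ j, ∑ t : Fin (r + 2), (b j - a (m0, Fin.castLE hg t))⁻¹ * v t = 0 := by
      intro j
      have := congrFun hMv j
      simpa [Matrix.mulVec, dotProduct, hM] using this
    have hvall : ∀ t, v t ≠ 0 := by
      intro t0 ht0
      apply hv0
      have hcard_erase : (Finset.univ.erase t0).card = r + 1 := by
        rw [Finset.card_erase_of_mem (Finset.mem_univ _)]
        simp
      have hz := cauchy_zero (fun t : Fin (r + 2) => a (m0, Fin.castLE hg t)) b
        (Finset.univ.erase t0) Finset.univ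
        (fun x _ y _ h => Fin.castLE_injective hg (congrArg Prod.snd (ha h)))
        (fun x _ y _ h => hbinj h)
        (Finset.card_pos.mp (by omega))
        (fun i _ j _ => hba _ _)
        (by simp [hcard_erase])
        v
        (fun j _ => by
          rw [Finset.sum_erase _ (by rw [ht0, mul_zero])]
          exact hMvj j)
      have hz0 : ∀ t, v t = 0 := by
        intro t
        by_cases h : t = t0
        · rw [h]; exact ht0
        · exact hz t (Finset.mem_erase.mpr ⟨h, Finset.mem_univ _⟩)
      funext t; exact hz0 t
    set D : Fin p × Fin g → F := fun i =>
      if h : i.1 = m0 ∧ (i.2 : ℕ) < r + 2 then v ⟨(i.2 : ℕ), h.2⟩ else 0 with hD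
    have hDemb : ∀ t : Fin (r + 2), D (m0, Fin.castLE hg t) = v t := by
      intro t
      have hc : ((m0, Fin.castLE hg t) : Fin p × Fin g).1 = m0 ∧
          (((m0, Fin.castLE hg t) : Fin p × Fin g).2 : ℕ) < r + 2 := ⟨rfl, t.isLt⟩
      simp only [hD]
      rw [dif_pos]
      · exact congrArg v (Fin.ext rfl)
      · exact ⟨trivial, t.isLt⟩
    have hDsupp : ∀ i, D i ≠ 0 → i.1 = m0 := by
      intro i hi
      by_contra h
      apply hi
      rw [hD]
      exact dif_neg (fun hc => h hc.1)
    have hDchar : ∀ i, D i ≠ 0 ↔ ∃ t : Fin (r + 2), i = (m0, Fin.castLE hg t) := by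
      intro i
      constructor
      · intro hi
        by_cases h : i.1 = m0 ∧ (i.2 : ℕ) < r + 2
        · obtain ⟨m, x⟩ := i
          obtain ⟨h1, h2⟩ := h
          subst h1
          exact ⟨⟨(x : ℕ), h2⟩, congrArg (Prod.mk m0) (Fin.ext rfl)⟩
        · exact absurd (by rw [hD]; exact dif_neg h) hi
      · rintro ⟨t, rfl⟩
        rw [hDemb]
        exact hvall t
    have hDne : D ≠ 0 := by
      intro h
      have := hDemb ⟨0, by omega⟩
      rw [h] at this
      exact hvall _ this.symm
    refine ⟨D, hDne, ⟨m0, hDsupp⟩, ?_⟩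
    -- compute hammingNorm D
    let emb : Fin (r + 2) ↪ Fin p × Fin g :=
      ⟨fun t => (m0, Fin.castLE hg t), fun x y h => Fin.castLE_injective hg (congrArg Prod.snd h)⟩
    have hfilter : ({i | D i ≠ 0} : Finset (Fin p × Fin g)) = Finset.univ.map emb := by
      ext i
      rw [Finset.mem_filter, Finset.mem_map]
      constructor
      · intro hi
        obtain ⟨t, ht⟩ := (hDchar i).mp hi.2
        exact ⟨t, Finset.mem_univ _, ht.symm⟩
      · rintro ⟨t, -, rfl⟩
        exact ⟨Finset.mem_univ _, (hDchar _).mpr ⟨t, rfl⟩⟩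
    have hnD : hammingNorm D = r + 2 := by
      rw [hammingNorm, hfilter, Finset.card_map, Finset.card_univ, Fintype.card_fin]
    -- G j = 0
    have hGzero : ∀ j : Fin (r + 1), (∑ i, (b j - a i)⁻¹ * D i) = 0 := by
      intro j
      have hsub : ∑ i ∈ Finset.univ.map emb, (b j - a i)⁻¹ * D i
          = ∑ i, (b j - a i)⁻¹ * D i := by
        refine Finset.sum_subset (Finset.subset_univ _) ?_
        intro i _ hi
        have : D i = 0 := by
          by_contra h
          rw [← hfilter] at hi
          exact hi (Finset.mem_filter.mpr ⟨Finset.mem_univ _, h⟩)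
        rw [this, mul_zero]
      rw [← hsub, Finset.sum_map]
      calc ∑ t : Fin (r + 2), (b j - a (m0, Fin.castLE hg t))⁻¹ * D (m0, Fin.castLE hg t)
          = ∑ t : Fin (r + 2), (b j - a (m0, Fin.castLE hg t))⁻¹ * v t := by
            refine Finset.sum_congr rfl fun t _ => by rw [hDemb]
        _ = 0 := hMvj j
    have hLzero : ∀ m : Fin p,
        (∑ t : Fin g, (b (Fin.last r) - a (m, t))⁻¹ * D (m, t)) = 0 := by
      intro m
      by_cases hm : m = m0
      · have : ∑ t : Fin g, (b (Fin.last r) - a (m, t))⁻¹ * D (m, t)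
            = ∑ i, (b (Fin.last r) - a i)⁻¹ * D i := by
          rw [Fintype.sum_prod_type]
          rw [Finset.sum_eq_single m]
          · intro m' _ hm'
            refine Finset.sum_eq_zero fun t _ => ?_
            have : D (m', t) = 0 := by
              by_contra h
              exact hm' ((hDsupp _ h).trans hm.symm)
            rw [this, mul_zero]
          · intro h; exact absurd (Finset.mem_univ _) h
        rw [this]
        exact hGzero (Fin.last r)
      · refine Finset.sum_eq_zero fun t _ => ?_
        have : D (m, t) = 0 := by
          by_contra h
          exact hm (hDsupp _ h)
        rw [this, mul_zero]
    rw [hn D, hnD]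
    have h1 : (fun j : Fin (r + 1) => ∑ i, (b j - a i)⁻¹ * D i) = 0 := funext hGzero
    have h2 : (fun m : Fin p => ∑ t : Fin g, (b (Fin.last r) - a (m, t))⁻¹ * D (m, t)) = 0 :=
      funext hLzero
    rw [h1, h2, hammingNorm_zero, hammingNorm_zero]
  · -- lower bound
    intro D hD
    set G : Fin (r + 1) → F := fun j => ∑ i, (b j - a i)⁻¹ * D i with hG
    set S : Finset (Fin p × Fin g) := {i | D i ≠ 0} with hS
    have hSne : S.Nonempty := by
      by_contra h
      apply hD
      funext i
      by_contra hi
      exact h ⟨i, Finset.mem_filter.mpr ⟨Finset.mem_univ _, hi⟩⟩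
    have hScard : S.card = hammingNorm D := rfl
    rw [hn D]
    by_cases hbig : r + 2 ≤ hammingNorm D
    · omega
    · set T : Finset (Fin (r + 1)) := {j | G j = 0} with hT
      have hTlt : T.card < S.card := by
        by_contra h
        push_neg at h
        have hz := cauchy_zero a b S T (fun x _ y _ hxy => ha hxy)
          (fun x _ y _ hxy => hbinj hxy) hSne (fun i _ j _ => hba i j) h D
          (fun j hj => by
            have hGj : G j = 0 := (Finset.mem_filter.mp hj).2
            have : ∑ i ∈ S, (b j - a i)⁻¹ * D i = ∑ i, (b j - a i)⁻¹ * D i := by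
              refine Finset.sum_subset (Finset.subset_univ _) ?_
              intro i _ hi
              have : D i = 0 := by
                by_contra hne
                exact hi (Finset.mem_filter.mpr ⟨Finset.mem_univ _, hne⟩)
              rw [this, mul_zero]
            rw [this]
            exact hGj)
        obtain ⟨i, hi⟩ := hSne
        exact (Finset.mem_filter.mp hi).2 (hz i hi)
      have hpart : T.card + hammingNorm G = r + 1 := by
        have h1 := Finset.card_filter_add_card_filter_not
          (s := (Finset.univ : Finset (Fin (r + 1)))) (p := fun j => G j = 0)
        rw [Finset.card_univ, Fintype.card_fin] at h1
        have h2 : #(Finset.filter (fun j : Fin (r + 1) => ¬ G j = 0) Finset.univ)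
            = hammingNorm G := by
          rw [hammingNorm]
        rw [h2] at h1
        rw [hT]
        exact h1
      rw [← hG]
      omega
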